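/- If η ∈ F_{q^n} satisfies N(η) ≠ (-1)^{nk} where N is the norm from F_{q^n} to F_q, then for every f in the twisted Gabidulin set G(η,r) with f ≠ 0, the kernel of f on F_{q^n} has F_q-dimension at most k-1. -/

import Mathlib

open Polynomial Finset

private lemma geom_nat (q : ℕ) (hq : 1 ≤ q) (n : ℕ) :
    (q - 1) * ∑ i ∈ Finset.range n, q ^ i = q ^ n - 1 := by
  induction n with
  | zero => simp
  | succ n ih =>
    rw [Finset.sum_range_succ, Nat.mul_add, ih]
    have h1 : 1 ≤ q ^ n := Nat.one_le_pow _ _ hq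
    have h2 : (q - 1) * q ^ n = q * q ^ n - q ^ n := by rw [Nat.sub_mul, one_mul]
    have h3 : q ^ n ≤ q * q ^ n := Nat.le_mul_of_pos_left _ hq
    have h4 : q ^ (n + 1) = q * q ^ n := by rw [pow_succ, mul_comm]
    omega

private lemma sum_pow_parity (q : ℕ) (hq : Odd q) (n : ℕ) :
    (∑ i ∈ Finset.range n, q ^ i) % 2 = n % 2 := by
  induction n with
  | zero => simp
  | succ n ih =>
    rw [Finset.sum_range_succ]
    have : q ^ n % 2 = 1 := Nat.odd_iff.mp (hq.pow)
    omega

private lemma orbit_prod (F L : Type) [Field F] [Fintype F] [Field L] [Algebra F L]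
    (e : ℕ) (he : ∀ x : L, x ≠ 0 → x ^ (e * (Fintype.card F - 1)) = 1) :
    ∀ N : ℕ, ∀ T : Finset L, T.card ≤ N → (0:L) ∉ T →
    (∀ v ∈ T, ∀ u : Fˣ, algebraMap F L u * v ∈ T) →
    ∃ m : ℕ, T.card = m * (Fintype.card F - 1) ∧ ∏ v ∈ T, v ^ e = (-1 : L) ^ (e * m) := by
  classical
  intro N
  induction N with
  | zero =>
    intro T hT _ _
    have : T = ∅ := Finset.card_eq_zero.mp (Nat.le_zero.mp hT)
    subst this
    exact ⟨0, by simp, by simp⟩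
  | succ N ih =>
    intro T hT h0 hcl
    rcases T.eq_empty_or_nonempty with rfl | ⟨w, hw⟩
    · exact ⟨0, by simp, by simp⟩
    have hw0 : w ≠ 0 := fun h => h0 (h ▸ hw)
    have hinj : Function.Injective (fun u : Fˣ => algebraMap F L u * w) := by
      intro u1 u2 h
      simp only at h
      have h2 := mul_right_cancel₀ hw0 h
      exact Units.ext ((algebraMap F L).injective h2)
    set O : Finset L := Finset.image (fun u : Fˣ => algebraMap F L u * w) Finset.univ with hO
    have hOcard : O.card = Fintype.card F - 1 := by
      rw [hO, Finset.card_image_of_injective _ hinj, Finset.card_univ, Fintype.card_units]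
    have hOsub : O ⊆ T := by
      intro v hv
      rw [hO, Finset.mem_image] at hv
      obtain ⟨u, _, rfl⟩ := hv
      exact hcl w hw u
    have hOne : O.Nonempty := ⟨algebraMap F L (1 : Fˣ) * w, by
      rw [hO, Finset.mem_image]; exact ⟨1, Finset.mem_univ _, rfl⟩⟩
    have hcardF : 1 ≤ Fintype.card F - 1 := by
      have := Fintype.one_lt_card (α := F)
      omega
    have hOprod : ∏ v ∈ O, v ^ e = (-1 : L) ^ e := by
      rw [hO, Finset.prod_image (fun u _ u' _ h => hinj h)]
      have : ∀ u : Fˣ, (algebraMap F L u * w) ^ e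
          = (algebraMap F L u) ^ e * w ^ e := fun u => mul_pow _ _ _
      have hprod : (∏ u : Fˣ, (u : F)) = (-1 : F) := by
        have h1 := FiniteField.prod_univ_units_id_eq_neg_one (K := F)
        calc (∏ u : Fˣ, (u : F)) = ((∏ u : Fˣ, u : Fˣ) : F) :=
              (map_prod (Units.coeHom F) _ _).symm
          _ = ((-1 : Fˣ) : F) := by rw [h1]
          _ = -1 := by simp
      rw [Finset.prod_congr rfl fun u _ => this u, Finset.prod_mul_distrib,
        Finset.prod_const, Finset.card_univ, Fintype.card_units, ← pow_mul,
        he w hw0, mul_one, Finset.prod_pow, ← map_prod, hprod, map_neg, map_one]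
    set T' : Finset L := T \ O with hT'
    have hT'card : T'.card = T.card - (Fintype.card F - 1) := by
      rw [hT', Finset.card_sdiff_of_subset hOsub, hOcard]
    have hT'le : T'.card ≤ N := by
      have := Finset.card_le_card hOsub
      omega
    have h0' : (0:L) ∉ T' := fun h => h0 (Finset.mem_sdiff.mp h).1
    have hcl' : ∀ v ∈ T', ∀ u : Fˣ, algebraMap F L u * v ∈ T' := by
      intro v hv u
      rw [hT', Finset.mem_sdiff] at hv ⊢
      refine ⟨hcl v hv.1 u, fun h => hv.2 ?_⟩
      rw [hO, Finset.mem_image] at h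
      obtain ⟨u', _, hu'⟩ := h
      rw [hO, Finset.mem_image]
      refine ⟨u⁻¹ * u', Finset.mem_univ _, ?_⟩
      have hA : algebraMap F L (u : F) ≠ 0 := by
        rw [_root_.map_ne_zero]; exact Units.ne_zero u
      rw [Units.val_mul, map_mul, Units.val_inv_eq_inv_val, map_inv₀, mul_assoc, hu']
      exact inv_mul_cancel_left₀ hA v
    obtain ⟨m, hm, hprodT'⟩ := ih T' hT'le h0' hcl'
    refine ⟨m + 1, ?_, ?_⟩
    · have := Finset.card_le_card hOsub
      rw [add_mul, one_mul, ← hm, hT'card]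
      omega
    · rw [← Finset.prod_sdiff hOsub, ← hT', hprodT', hOprod, ← pow_add, mul_add, mul_one]

/-- If η ∈ F_{q^n} satisfies N(η) ≠ (-1)^{nk}, then for every
nonzero f in the twisted Gabidulin set G(η,r), the kernel of f on F_{q^n} has
F_q-dimension at most k-1. -/
theorem stmt_8 (q n : ℕ) (hq : IsPrimePow q) (hn : 0 < n)
    (F L : Type) [Field F] [Fintype F] [Field L] [Fintype L] [Algebra F L]
    (hF : Fintype.card F = q) (hL : Fintype.card L = q ^ n)
    (k r : ℕ) (hk : 0 < k) (hkn : k < n) (η : L)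
    (hη : η ^ ((q ^ n - 1) / (q - 1)) ≠ (-1) ^ (n * k))
    (c : Fin k → L) (hc : c ≠ 0) :
    ∃ V : Submodule F L,
      (V : Set L) = {a : L |
        (∑ i : Fin k, c i * a ^ q ^ (i : ℕ)) + η * (c ⟨0, hk⟩) ^ q ^ r * a ^ q ^ k = 0} ∧
      Module.finrank F V ≤ k - 1 := by
  classical
  have hq2 : 2 ≤ q := hq.two_le
  obtain ⟨p, s, hpp, hs, hq'⟩ := hq
  have hp : p.Prime := Nat.prime_iff.mpr hpp
  haveI : Fact p.Prime := ⟨hp⟩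
  -- characteristic of L is p
  obtain ⟨m₀, hm₀p, hm₀⟩ := FiniteField.card L (ringChar L)
  have hpchar : p = ringChar L := by
    have hdvd : p ∣ Fintype.card L := by
      rw [hL, ← hq']
      exact dvd_pow (dvd_pow_self p hs.ne') (by positivity)
    rw [hm₀] at hdvd
    exact (Nat.prime_dvd_prime_iff_eq hp hm₀p).mp (hp.dvd_of_dvd_pow hdvd)
  haveI hcharL : CharP L p := hpchar ▸ ringChar.charP L
  -- Frobenius is additive
  have hfrob : ∀ (j : ℕ) (x y : L), (x + y) ^ q ^ j = x ^ q ^ j + y ^ q ^ j := by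
    intro j x y
    have hqe : q ^ j = p ^ (s * j) := by rw [← hq', ← pow_mul]
    rw [hqe]
    exact add_pow_char_pow x y p (s * j)
  -- elements of F are fixed by q-power maps
  have hFu : ∀ (u : F) (j : ℕ), u ^ q ^ j = u := by
    intro u j
    have := FiniteField.pow_card_pow (K := F) j u
    rwa [hF] at this
  have hqj1 : ∀ j : ℕ, q ^ j = 1 ↔ j = 0 := by
    intro j
    constructor
    · intro h
      by_contra hj
      have : q ≤ q ^ j := Nat.le_self_pow hj q
      omega
    · intro h; simp [h]
  set c0 := c ⟨0, hk⟩ with hc0def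
  set lc := η * c0 ^ q ^ r with hlc
  set S : Set L := {a : L |
      (∑ i : Fin k, c i * a ^ q ^ (i : ℕ)) + lc * a ^ q ^ k = 0} with hS
  have hmemS : ∀ a : L,
      a ∈ S ↔ (∑ i : Fin k, c i * a ^ q ^ (i : ℕ)) + lc * a ^ q ^ k = 0 :=
    fun a => Iff.rfl
  have hzero : (0 : L) ∈ S := by
    rw [hmemS]
    have h0p : ∀ j : ℕ, (0 : L) ^ q ^ j = 0 := fun j => zero_pow (by positivity)
    simp [h0p]
  have hadd : ∀ a b : L, a ∈ S → b ∈ S → a + b ∈ S := by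
    intro a b ha hb
    rw [hmemS] at ha hb ⊢
    simp only [hfrob, mul_add, Finset.sum_add_distrib]
    linear_combination ha + hb
  have hsmul : ∀ (u : F) (a : L), a ∈ S → u • a ∈ S := by
    intro u a ha
    rw [hmemS] at ha ⊢
    have hsm : ∀ j : ℕ, (u • a) ^ q ^ j = algebraMap F L u * a ^ q ^ j := by
      intro j
      rw [Algebra.smul_def, mul_pow, ← map_pow, hFu]
    simp only [hsm]
    have hsum : (∑ i : Fin k, c i * (algebraMap F L u * a ^ q ^ (i : ℕ)))
        = algebraMap F L u * ∑ i : Fin k, c i * a ^ q ^ (i : ℕ) := by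
      rw [Finset.mul_sum]
      exact Finset.sum_congr rfl fun i _ => by ring
    rw [hsum]
    linear_combination algebraMap F L u * ha
  set V : Submodule F L :=
    { carrier := S
      add_mem' := fun {a b} ha hb => hadd a b ha hb
      zero_mem' := hzero
      smul_mem' := fun u a ha => hsmul u a ha } with hV
  refine ⟨V, rfl, ?_⟩
  haveI : Fintype V := Fintype.ofFinite _
  set d := Module.finrank F V with hd
  have hcardV : Fintype.card V = q ^ d := by rw [← hF]; exact Module.card_eq_pow_finrank
  set T : Finset L := Finset.univ.filter (fun a => a ∈ S) with hT
  have hmemT : ∀ a : L, a ∈ T ↔ a ∈ S := by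
    intro a; simp [hT]
  have hTcard : T.card = q ^ d := by
    rw [← hcardV]
    exact (Fintype.card_of_subtype T (fun x => (hmemT x))).symm
  -- the polynomial
  set P : L[X] := (∑ i : Fin k, C (c i) * X ^ q ^ (i : ℕ)) + C lc * X ^ q ^ k with hP
  have hroot : ∀ a ∈ T, P.IsRoot a := by
    intro a ha
    rw [hmemT, hmemS] at ha
    simp only [IsRoot, hP, eval_add, eval_finset_sum, eval_mul, eval_C, eval_pow, eval_X]
    exact ha
  have hcoqj : ∀ j : Fin k, P.coeff (q ^ (j : ℕ)) = c j := by
    intro j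
    rw [hP, coeff_add, finset_sum_coeff]
    have h2 : (C lc * X ^ q ^ k).coeff (q ^ (j : ℕ)) = 0 := by
      rw [coeff_C_mul, coeff_X_pow, if_neg, mul_zero]
      intro h
      have := Nat.pow_right_injective hq2 h
      have := j.isLt
      omega
    rw [h2, add_zero, Finset.sum_eq_single j]
    · rw [coeff_C_mul, coeff_X_pow, if_pos rfl, mul_one]
    · intro i _ hi
      rw [coeff_C_mul, coeff_X_pow, if_neg, mul_zero]
      intro h
      exact hi (Fin.ext (Nat.pow_right_injective hq2 h.symm))
    · intro h; exact absurd (Finset.mem_univ _) h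
  have hcoqk : P.coeff (q ^ k) = lc := by
    rw [hP, coeff_add, finset_sum_coeff]
    have h1 : ∀ i : Fin k, (C (c i) * X ^ q ^ (i : ℕ)).coeff (q ^ k) = 0 := by
      intro i
      rw [coeff_C_mul, coeff_X_pow, if_neg, mul_zero]
      intro h
      have := Nat.pow_right_injective hq2 h
      have := i.isLt
      omega
    rw [Finset.sum_eq_zero fun i _ => h1 i, zero_add, coeff_C_mul, coeff_X_pow,
      if_pos rfl, mul_one]
  have hdegle : P.natDegree ≤ q ^ k := by
    rw [hP]
    refine le_trans (natDegree_add_le _ _) (max_le ?_ ?_)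
    · refine le_trans (natDegree_sum_le _ _) ?_
      rw [Finset.fold_max_le]
      refine ⟨Nat.zero_le _, fun i _ => ?_⟩
      exact le_trans (natDegree_C_mul_X_pow_le _ _)
        (Nat.pow_le_pow_right (by omega) (le_of_lt i.isLt))
    · exact natDegree_C_mul_X_pow_le _ _
  by_cases hlc0 : lc = 0
  · -- degenerate case: degree at most q^(k-1)
    have hdegle' : P.natDegree ≤ q ^ (k - 1) := by
      rw [hP, hlc0, map_zero, zero_mul, add_zero]
      refine le_trans (natDegree_sum_le _ _) ?_
      rw [Finset.fold_max_le]
      refine ⟨Nat.zero_le _, fun i _ => ?_⟩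
      refine le_trans (natDegree_C_mul_X_pow_le _ _)
        (Nat.pow_le_pow_right (by omega) ?_)
      have := i.isLt
      omega
    have hPne : P ≠ 0 := by
      obtain ⟨j, hj⟩ := Function.ne_iff.mp hc
      intro h
      apply hj
      have h2 := hcoqj j
      rw [h, coeff_zero] at h2
      simpa using h2.symm
    have hsub : T ⊆ P.roots.toFinset := by
      intro a ha
      rw [Multiset.mem_toFinset, mem_roots hPne]
      exact hroot a ha
    have hle : q ^ d ≤ q ^ (k - 1) := by
      calc q ^ d = T.card := hTcard.symm
        _ ≤ P.roots.toFinset.card := Finset.card_le_card hsub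
        _ ≤ Multiset.card P.roots := Multiset.toFinset_card_le _
        _ ≤ P.natDegree := P.card_roots'
        _ ≤ q ^ (k - 1) := hdegle'
    exact (Nat.pow_le_pow_iff_right hq2).mp hle
  · -- main case
    by_contra hcon
    have hdk : k ≤ d := by omega
    have hPne : P ≠ 0 := fun h => hlc0 (by rw [← hcoqk, h, coeff_zero])
    have hndeg : P.natDegree = q ^ k :=
      le_antisymm hdegle (le_natDegree_of_ne_zero (by rw [hcoqk]; exact hlc0))
    have hlead : P.leadingCoeff = lc := by rw [leadingCoeff, hndeg, hcoqk]
    have hsub : T ⊆ P.roots.toFinset := by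
      intro a ha
      rw [Multiset.mem_toFinset, mem_roots hPne]
      exact hroot a ha
    have hchain : q ^ k ≤ T.card := by
      rw [hTcard]; exact Nat.pow_le_pow_right (by omega) hdk
    have hcard1 : T.card ≤ Multiset.card P.roots :=
      le_trans (Finset.card_le_card hsub) (Multiset.toFinset_card_le _)
    have hcard2 : Multiset.card P.roots ≤ q ^ k := hndeg ▸ P.card_roots'
    have hrc : Multiset.card P.roots = q ^ k :=
      le_antisymm hcard2 (le_trans hchain hcard1)
    have hTc : T.card = q ^ k := le_antisymm (le_trans hcard1 hcard2) hchain
    have hval : T.val ≤ P.roots := by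
      rw [Multiset.le_iff_count]
      intro a
      by_cases haT : a ∈ T
      · have h1 : T.val.count a = 1 := Multiset.count_eq_one_of_mem T.nodup haT
        rw [h1, count_roots]
        exact (rootMultiplicity_pos hPne).mpr (hroot a haT)
      · rw [Multiset.count_eq_zero_of_notMem haT]
        exact Nat.zero_le _
    have hrootsT : T.val = P.roots := by
      refine Multiset.eq_of_le_of_card_le hval ?_
      rw [hrc, ← hTc]
      rfl
    have hsplit : P.Splits :=
      (splits_iff_card_roots (f := P)).mpr (by rw [hrc, hndeg])
    have hfact := hsplit.eq_prod_roots
    rw [hlead, ← hrootsT] at hfact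
    have hfact' : P = C lc * ∏ v ∈ T, (X - C v) := by
      rw [hfact]; rfl
    have h0T : (0 : L) ∈ T := (hmemT 0).mpr hzero
    have hprodsplit : (∏ v ∈ T, (X - C v)) = X * ∏ v ∈ T.erase 0, (X - C v) := by
      rw [← Finset.mul_prod_erase T _ h0T, map_zero, sub_zero]
    have hone : (1 : ℕ) = 0 + 1 := rfl
    have hcoeff1 : P.coeff 1 = lc * ∏ v ∈ T.erase 0, (-v) := by
      rw [hfact', hprodsplit, coeff_C_mul, hone, coeff_X_mul,
        coeff_zero_eq_eval_zero, eval_prod]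
      simp only [eval_sub, eval_X, eval_C, zero_sub]
    have hkey : c0 = lc * ∏ v ∈ T.erase 0, (-v) := by
      rw [← hcoeff1]
      have h2 := hcoqj ⟨0, hk⟩
      rw [pow_zero] at h2
      exact h2.symm
    -- set up the orbit product
    set T0 := T.erase 0 with hT0
    have hT0card : T0.card = q ^ k - 1 := by
      rw [hT0, Finset.card_erase_of_mem h0T, hTc]
    have h0T0 : (0 : L) ∉ T0 := Finset.notMem_erase _ _
    have hclT0 : ∀ v ∈ T0, ∀ u : Fˣ, algebraMap F L u * v ∈ T0 := by
      intro v hv u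
      have hv0 : v ≠ 0 := Finset.ne_of_mem_erase hv
      have hvT : v ∈ T := Finset.mem_of_mem_erase hv
      have hmem : algebraMap F L u * v ∈ T := by
        rw [hmemT]
        have h3 := hsmul (u : F) v ((hmemT v).mp hvT)
        rwa [Algebra.smul_def] at h3
      exact Finset.mem_erase.mpr
        ⟨mul_ne_zero (by rw [_root_.map_ne_zero]; exact Units.ne_zero u) hv0, hmem⟩
    set e := (q ^ n - 1) / (q - 1) with he
    have hgeo : (q - 1) * ∑ i ∈ Finset.range n, q ^ i = q ^ n - 1 :=
      geom_nat q (by omega) n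
    have heq : e = ∑ i ∈ Finset.range n, q ^ i := by
      rw [he, ← hgeo, Nat.mul_div_cancel_left _ (by omega : 0 < q - 1)]
    have hepow : e * (q - 1) = q ^ n - 1 := by rw [heq, mul_comm, hgeo]
    have hL1 : ∀ x : L, x ≠ 0 → x ^ (q ^ n - 1) = 1 := by
      intro x hx
      have := FiniteField.pow_card_sub_one_eq_one x hx
      rwa [hL] at this
    have heL : ∀ x : L, x ≠ 0 → x ^ (e * (Fintype.card F - 1)) = 1 := by
      intro x hx
      rw [hF, hepow]
      exact hL1 x hx
    obtain ⟨m, hmcard, hmprod⟩ := orbit_prod F L e heL T0.card T0 le_rfl h0T0 hclT0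
    rw [hF] at hmcard
    have hc00 : c0 ≠ 0 := by
      intro h
      apply hlc0
      rw [hlc, h, zero_pow (by positivity : q ^ r ≠ 0), mul_zero]
    have hprodneg : (∏ v ∈ T0, (-v)) = (-1 : L) ^ T0.card * ∏ v ∈ T0, v := by
      rw [← Finset.prod_const, ← Finset.prod_mul_distrib]
      exact Finset.prod_congr rfl fun v _ => by ring
    have hstep : c0 ^ e = lc ^ e * ((-1 : L) ^ (e * T0.card) * (-1 : L) ^ (e * m)) := by
      rw [hkey, mul_pow, ← Finset.prod_pow,
        Finset.prod_congr rfl (fun v _ => neg_pow v e), Finset.prod_mul_distrib,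
        Finset.prod_const, ← pow_mul, hmprod]
    have hz : (c0 ^ e) ^ (q - 1) = 1 := by
      rw [← pow_mul, hepow]; exact hL1 c0 hc00
    have hdvd : (q - 1) ∣ (q ^ r - 1) := by
      simpa using Nat.sub_dvd_pow_sub_pow q 1 r
    obtain ⟨t, ht⟩ := hdvd
    have hqr1 : 1 ≤ q ^ r := Nat.one_le_pow _ _ (by omega)
    have hc0qr : c0 ^ (q ^ r * e) = c0 ^ e := by
      have h1 : q ^ r * e = e * ((q ^ r - 1) + 1) := by
        rw [Nat.sub_add_cancel hqr1, mul_comm]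
      rw [h1, pow_mul, pow_succ, ht, pow_mul, hz, one_pow, one_mul]
    have hlce : lc ^ e = η ^ e * c0 ^ e := by
      rw [hlc, mul_pow, ← pow_mul, hc0qr]
    set A := e * T0.card + e * m with hA
    have hetaA : η ^ e * (-1 : L) ^ A = 1 := by
      have hce : c0 ^ e ≠ 0 := pow_ne_zero _ hc00
      have h2 : c0 ^ e * (η ^ e * (-1 : L) ^ A) = c0 ^ e * 1 := by
        rw [mul_one, hA, pow_add]
        nth_rewrite 2 [hstep]
        rw [hlce]; ring
      have h3 := mul_left_cancel₀ hce h2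
      exact h3
    have hAA : ((-1 : L) ^ A) * ((-1 : L) ^ A) = 1 := by
      rw [← pow_add, ← two_mul, pow_mul]
      norm_num
    have hetaeq : η ^ e = (-1 : L) ^ A := by
      calc η ^ e = η ^ e * (((-1 : L) ^ A) * ((-1 : L) ^ A)) := by rw [hAA, mul_one]
        _ = (η ^ e * (-1 : L) ^ A) * (-1 : L) ^ A := by ring
        _ = (-1 : L) ^ A := by rw [hetaA, one_mul]
    apply hη
    by_cases hq2' : 2 ∣ q
    · have hp2 : p = 2 := by
        have h2 : 2 ∣ p ^ s := hq' ▸ hq2'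
        exact ((Nat.prime_dvd_prime_iff_eq Nat.prime_two hp).mp
          (Nat.Prime.dvd_of_dvd_pow Nat.prime_two h2)).symm
      haveI : CharP L 2 := hp2 ▸ hcharL
      have hneg : (-1 : L) = 1 := by
        have := CharTwo.neg_eq (R := L) 1
        simpa using this
      rw [hetaeq, hneg, one_pow, one_pow]
    · have hqodd : Odd q := Nat.odd_iff.mpr (by omega)
      have hpar_e : e % 2 = n % 2 := by rw [heq]; exact sum_pow_parity q hqodd n
      have hm' : m = ∑ i ∈ Finset.range k, q ^ i := by
        have hgk : (q - 1) * ∑ i ∈ Finset.range k, q ^ i = q ^ k - 1 :=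
          geom_nat q (by omega) k
        have h4 : (q - 1) * m = (q - 1) * ∑ i ∈ Finset.range k, q ^ i := by
          rw [hgk, ← hT0card, hmcard, mul_comm]
        exact Nat.eq_of_mul_eq_mul_left (by omega) h4
      have hpar_m : m % 2 = k % 2 := by rw [hm']; exact sum_pow_parity q hqodd k
      have hqk1 : 1 ≤ q ^ k := Nat.one_le_pow _ _ (by omega)
      have hT0even : T0.card % 2 = 0 := by
        rw [hT0card]
        have h5 : q ^ k % 2 = 1 := Nat.odd_iff.mp hqodd.pow
        omega
      have hApar : A % 2 = (n * k) % 2 := by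
        have h1 : e * T0.card % 2 = 0 := by rw [Nat.mul_mod, hT0even]; simp
        have h2 : e * m % 2 = n * k % 2 := by
          rw [Nat.mul_mod, hpar_e, hpar_m, ← Nat.mul_mod]
        rw [hA]
        omega
      rw [hetaeq, neg_one_pow_eq_pow_mod_two, hApar, ← neg_one_pow_eq_pow_mod_two]
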